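/- Let X be a real Banach space, f : X → ℝ ∪ {+∞} a proper l.s.c. convex function continuous on the interior of its domain, and suppose 0 ∈ int(dom f). Then ∂f(x) is nonempty for every x ∈ int(dom f), and defining A as the closed convex hull (in the topology τ × w*) of {(f(x) − p[x](x), p[x]) : x ∈ B(0,r)} for any selection p[x] ∈ ∂f(x), one has f(y) ≥ sup_{(a,p)∈A}(a + p(y)) for all y ∈ X with equality on B(0,r). -/

import Mathlib

open NormedSpace Filter Topology

theorem subdiff_nonempty {X : Type*} [NormedAddCommGroup X] [NormedSpace ℝ X]
    (f : X → EReal)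
    (hbot : ∀ x, f x ≠ ⊥)
    (hconv : ∀ x y : X, ∀ a b : ℝ, 0 ≤ a → 0 ≤ b → a + b = 1 →
      f (a • x + b • y) ≤ (a : EReal) * f x + (b : EReal) * f y)
    (hcont : ContinuousOn f (interior {x | f x ≠ ⊤}))
    (x₀ : X) (hx₀ : x₀ ∈ interior {x | f x ≠ ⊤}) :
    ∃ q : StrongDual ℝ X, ∀ y, f x₀ + ((q (y - x₀) : ℝ) : EReal) ≤ f y := by
  have hx₀dom : f x₀ ≠ ⊤ := interior_subset hx₀
  set m := (f x₀).toReal with hm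
  have hfx₀ : f x₀ = (m : EReal) := (EReal.coe_toReal hx₀dom (hbot x₀)).symm
  have hca : ContinuousAt f x₀ :=
    (hcont x₀ hx₀).continuousAt (isOpen_interior.mem_nhds hx₀)
  have hev : ∀ᶠ y in 𝓝 x₀, f y < ((m + 1 : ℝ) : EReal) := by
    have hlt : f x₀ < ((m + 1 : ℝ) : EReal) := by
      rw [hfx₀]; exact_mod_cast lt_add_one m
    exact hca.eventually_lt continuousAt_const hlt
  obtain ⟨U, hUsub, hUopen, hx₀U⟩ := eventually_nhds_iff.mp hev
  -- the epigraph
  set E : Set (X × ℝ) := {z | f z.1 ≤ (z.2 : EReal)} with hEdef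
  have hreal : ∀ z : X × ℝ, z ∈ E → f z.1 = (((f z.1).toReal : ℝ) : EReal) := by
    intro z hz
    exact (EReal.coe_toReal (ne_top_of_le_ne_top (EReal.coe_ne_top _) hz) (hbot _)).symm
  have hEconv : Convex ℝ E := by
    intro z hz w hw a b ha hb hab
    have hz' := hz; have hw' := hw
    rw [Set.mem_setOf_eq, hreal z hz, EReal.coe_le_coe_iff] at hz'
    rw [Set.mem_setOf_eq, hreal w hw, EReal.coe_le_coe_iff] at hw'
    show f (a • z.1 + b • w.1) ≤ ((a * z.2 + b * w.2 : ℝ) : EReal)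
    calc f (a • z.1 + b • w.1) ≤ (a : EReal) * f z.1 + (b : EReal) * f w.1 :=
          hconv z.1 w.1 a b ha hb hab
      _ = ((a * (f z.1).toReal + b * (f w.1).toReal : ℝ) : EReal) := by
          rw [hreal z hz, hreal w hw, ← EReal.coe_mul, ← EReal.coe_mul, ← EReal.coe_add]
          norm_num
      _ ≤ ((a * z.2 + b * w.2 : ℝ) : EReal) := by
          apply EReal.coe_le_coe_iff.mpr
          have := mul_le_mul_of_nonneg_left hz' ha
          have := mul_le_mul_of_nonneg_left hw' hb
          linarith
  have hVsub : U ×ˢ Set.Ioi (m + 1) ⊆ E := by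
    rintro ⟨y, t⟩ ⟨hyU, ht⟩
    exact le_of_lt (lt_of_lt_of_le (hUsub y hyU) (by exact_mod_cast le_of_lt ht))
  have hVint : U ×ˢ Set.Ioi (m + 1) ⊆ interior E :=
    interior_maximal hVsub (hUopen.prod isOpen_Ioi)
  have hw2 : (x₀, m + 2) ∈ interior E := hVint ⟨hx₀U, Set.mem_Ioi.mpr (by norm_num)⟩
  have hnotmem : (x₀, m) ∉ interior E := by
    intro h
    obtain ⟨ε, hε, hball⟩ := Metric.mem_nhds_iff.mp (mem_interior_iff_mem_nhds.mp h)
    have hmem : ((x₀, m - ε / 2) : X × ℝ) ∈ Metric.ball ((x₀, m) : X × ℝ) ε := by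
      rw [Metric.mem_ball, Prod.dist_eq]
      have h1 : dist x₀ x₀ = 0 := dist_self _
      have h2 : dist (m - ε / 2) m = ε / 2 := by
        rw [Real.dist_eq, abs_of_nonpos (by linarith)]; ring
      rw [h1, h2]
      exact max_lt hε (by linarith)
    have := hball hmem
    rw [hEdef, Set.mem_setOf_eq, hfx₀, EReal.coe_le_coe_iff] at this
    linarith
  obtain ⟨φ, hφ⟩ := geometric_hahn_banach_open_point hEconv.interior isOpen_interior hnotmem
  have hdecomp : ∀ (y : X) (t : ℝ), φ (y, t) = φ (y, 0) + t * φ (0, 1) := by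
    intro y t
    have h : ((y, t) : X × ℝ) = (y, (0:ℝ)) + t • ((0 : X), (1:ℝ)) := by
      simp [Prod.ext_iff]
    rw [h, map_add, map_smul, smul_eq_mul]
  set c := φ ((0 : X), (1 : ℝ)) with hcdef
  have hc : c < 0 := by
    have h1 := hφ (x₀, m + 2) hw2
    rw [hdecomp x₀ (m + 2), hdecomp x₀ m] at h1
    linarith
  have hEle : ∀ z ∈ E, φ z ≤ φ (x₀, m) := by
    intro z hz
    have key : ∀ θ : ℝ, 0 < θ → θ ≤ 1 →
        θ * φ (x₀, m + 2) + (1 - θ) * φ z < φ (x₀, m) := by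
      intro θ hθ hθ1
      have hmem := hEconv.combo_interior_closure_mem_interior (a := θ) (b := 1 - θ)
        hw2 (subset_closure hz) hθ (by linarith) (by ring)
      have := hφ _ hmem
      rwa [map_add, map_smul, map_smul, smul_eq_mul, smul_eq_mul] at this
    have ht : Filter.Tendsto (fun θ : ℝ => θ * φ (x₀, m + 2) + (1 - θ) * φ z)
        (nhdsWithin 0 (Set.Ioi 0)) (nhds (φ z)) := by
      have hcont2 : Continuous fun θ : ℝ => θ * φ (x₀, m + 2) + (1 - θ) * φ z :=
        (continuous_id.mul continuous_const).add
          ((continuous_const.sub continuous_id).mul continuous_const)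
      have := hcont2.tendsto 0
      simp only [zero_mul, sub_zero, one_mul, zero_add] at this
      exact this.mono_left nhdsWithin_le_nhds
    refine le_of_tendsto ht ?_
    filter_upwards [Ioo_mem_nhdsGT_of_mem (Set.left_mem_Ico.mpr one_pos)] with θ hθ
    exact (key θ hθ.1 hθ.2.le).le
  refine ⟨(-c)⁻¹ • φ.comp (ContinuousLinearMap.inl ℝ X ℝ), ?_⟩
  intro y
  by_cases hy : f y = ⊤
  · rw [hy]; exact le_top
  · set s := (f y).toReal with hs
    have hfy : f y = (s : EReal) := (EReal.coe_toReal hy (hbot y)).symm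
    have hyE : ((y, s) : X × ℝ) ∈ E := by rw [hEdef, Set.mem_setOf_eq, hfy]
    have hle := hEle _ hyE
    rw [hdecomp y s, hdecomp x₀ m] at hle
    have hq : ((-c)⁻¹ • φ.comp (ContinuousLinearMap.inl ℝ X ℝ)) (y - x₀)
        = (-c)⁻¹ * (φ (y, 0) - φ (x₀, 0)) := by
      simp [ContinuousLinearMap.smul_apply, map_sub]
      ring
    rw [hfx₀, hfy, hq, ← EReal.coe_add, EReal.coe_le_coe_iff]
    have h0 : (0 : ℝ) < -c := by linarith
    have h1 : φ (y, 0) - φ (x₀, 0) ≤ (-c) * (s - m) := by nlinarith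
    have h2 : (-c)⁻¹ * (φ (y, 0) - φ (x₀, 0)) ≤ (-c)⁻¹ * ((-c) * (s - m)) :=
      mul_le_mul_of_nonneg_left h1 (by positivity)
    have h3 : (-c)⁻¹ * ((-c) * (s - m)) = s - m := by
      rw [← mul_assoc, inv_mul_cancel₀ h0.ne', one_mul]
    linarith [h2.trans_eq h3]

theorem stmt2' {X : Type*} [NormedAddCommGroup X] [NormedSpace ℝ X] [CompleteSpace X]
    (f : X → EReal) (r C : ℝ) (hr : 0 < r)
    (hbot : ∀ x, f x ≠ ⊥)
    (g : X → ℝ) (hg : ∀ x ∈ Metric.ball (0 : X) (4 * r), f x = ((g x : ℝ) : EReal))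
    (p : X → StrongDual ℝ X)
    (hp : ∀ x ∈ Metric.closedBall (0 : X) r, ∀ y : X,
      f x + ((p x (y - x) : ℝ) : EReal) ≤ f y) :
      ∀ A : Set (ℝ × WeakDual ℝ X),
        A = closure (convexHull ℝ
          ((fun x => ((g x - p x x : ℝ), StrongDual.toWeakDual (p x))) ''
            Metric.closedBall (0 : X) r)) →
        ((∀ y : X, (⨆ ap ∈ A, ((ap.1 + ap.2 y : ℝ) : EReal)) ≤ f y) ∧
          ∀ y ∈ Metric.closedBall (0 : X) r,
            f y = ⨆ ap ∈ A, ((ap.1 + ap.2 y : ℝ) : EReal)) := by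
  intro A hA
  have hball : Metric.closedBall (0 : X) r ⊆ Metric.ball (0 : X) (4 * r) := by
    intro x hx
    rw [Metric.mem_closedBall] at hx
    rw [Metric.mem_ball]
    linarith
  have key : ∀ y : X, ∀ s : ℝ, f y = (s : EReal) → ∀ ap ∈ A, ap.1 + ap.2 y ≤ s := by
    intro y s hs
    have hsub : A ⊆ {ap : ℝ × WeakDual ℝ X | ap.1 + ap.2 y ≤ s} := by
      rw [hA]
      apply closure_minimal
      · apply convexHull_min
        · rintro - ⟨x, hx, rfl⟩
          simp only [Set.mem_setOf_eq]
          have h1 := hp x hx y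
          rw [hg x (hball hx), hs] at h1
          rw [← EReal.coe_add, EReal.coe_le_coe_iff] at h1
          have h2 : p x (y - x) = p x y - p x x := map_sub _ _ _
          have h3 : (StrongDual.toWeakDual (p x)) y = p x y := rfl
          rw [h3]
          linarith [h1, h2 ▸ h1]
        · intro ap hap bp hbp a b ha hb hab
          simp only [Set.mem_setOf_eq] at *
          have e1 : (a • ap + b • bp).1 = a * ap.1 + b * bp.1 := rfl
          have e2 : (a • ap + b • bp).2 y = a * ap.2 y + b * bp.2 y := rfl
          rw [e1, e2]
          have habs : a * s + b * s = s := by rw [← add_mul, hab, one_mul]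
          linarith [mul_le_mul_of_nonneg_left hap ha, mul_le_mul_of_nonneg_left hbp hb]
      · have hcont : Continuous fun ap : ℝ × WeakDual ℝ X => ap.1 + ap.2 y :=
          continuous_fst.add ((WeakDual.eval_continuous y).comp continuous_snd)
        exact isClosed_le hcont continuous_const
    exact fun ap hap => hsub hap
  have hle : ∀ y : X, (⨆ ap ∈ A, ((ap.1 + ap.2 y : ℝ) : EReal)) ≤ f y := by
    intro y
    by_cases hy : f y = ⊤
    · rw [hy]; exact le_top
    · have hfy : f y = (((f y).toReal : ℝ) : EReal) := (EReal.coe_toReal hy (hbot y)).symm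
      rw [hfy]
      exact iSup₂_le fun ap hap => EReal.coe_le_coe_iff.mpr (key y _ hfy ap hap)
  refine ⟨hle, fun y hy => ?_⟩
  have hgy : f y = ((g y : ℝ) : EReal) := hg y (hball hy)
  refine le_antisymm ?_ (hle y)
  have hmem : ((g y - p y y : ℝ), StrongDual.toWeakDual (p y)) ∈ A := by
    rw [hA]
    exact subset_closure (subset_convexHull ℝ _ ⟨y, hy, rfl⟩)
  have h4 := le_iSup₂ (f := fun (ap : ℝ × WeakDual ℝ X) (_ : ap ∈ A) =>
    ((ap.1 + ap.2 y : ℝ) : EReal)) _ hmem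
  refine le_trans ?_ h4
  rw [hgy]
  apply le_of_eq
  norm_num

theorem stmt2 {X : Type*} [NormedAddCommGroup X] [NormedSpace ℝ X] [CompleteSpace X]
    (f : X → EReal) (r C : ℝ) (hr : 0 < r)
    (hproper : (∀ x, f x ≠ ⊥) ∧ ∃ x, f x ≠ ⊤)
    (hlsc : LowerSemicontinuous f)
    (hconv : ∀ x y : X, ∀ a b : ℝ, 0 ≤ a → 0 ≤ b → a + b = 1 →
      f (a • x + b • y) ≤ (a : EReal) * f x + (b : EReal) * f y)
    (hcont : ContinuousOn f (interior {x | f x ≠ ⊤}))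
    (hdom : (0 : X) ∈ interior {x | f x ≠ ⊤})
    (g : X → ℝ) (hg : ∀ x ∈ Metric.ball (0 : X) (4 * r), f x = ((g x : ℝ) : EReal))
    (hbound : ∀ x ∈ Metric.ball (0 : X) (4 * r), |g x| ≤ C)
    (p : X → StrongDual ℝ X)
    (hp : ∀ x ∈ Metric.closedBall (0 : X) r, ∀ y : X,
      f x + ((p x (y - x) : ℝ) : EReal) ≤ f y) :
    ((∀ x ∈ interior {x | f x ≠ ⊤}, ∃ q : StrongDual ℝ X,
        ∀ y, f x + ((q (y - x) : ℝ) : EReal) ≤ f y) ∧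
      ∀ A : Set (ℝ × WeakDual ℝ X),
        A = closure (convexHull ℝ
          ((fun x => ((g x - p x x : ℝ), StrongDual.toWeakDual (p x))) ''
            Metric.closedBall (0 : X) r)) →
        ((∀ y : X, (⨆ ap ∈ A, ((ap.1 + ap.2 y : ℝ) : EReal)) ≤ f y) ∧
          ∀ y ∈ Metric.closedBall (0 : X) r,
            f y = ⨆ ap ∈ A, ((ap.1 + ap.2 y : ℝ) : EReal))) := by
  refine ⟨fun x hx => subdiff_nonempty f hproper.1 hconv hcont x hx,
    stmt2' f r C hr hproper.1 g hg p hp⟩
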